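/- Let {A_n}_n be a sequence of n×n complex matrices with real spectra and f : D ⊂ ℝ^k → ℝ a measurable function on a set D with 0 < μ_k(D) < ∞. Assume {A_n}_n has asymptotic eigenvalue distribution described by f, i.e. for every continuous compactly supported F: ℂ → ℂ, lim_{n→∞}(1/n)∑_{j=1}^n F(λ_j(A_n)) = (1/μ_k(D))∫_D F(f(x))dx. Then {A_n}_n is sparsely vanishing in the sense of the eigenvalues (meaning lim_{M→∞} limsup_{n→∞} (1/n)·#{i ∈ {1,…,n} : |λ_i(A_n)| < 1/M} = 0) if and only if f is sparsely vanishing (the Lebesgue measure of {x ∈ D : f(x) = 0} is zero). -/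

import Mathlib

open MeasureTheory Filter Matrix

noncomputable def svBump (r R t : ℝ) : ℝ := max 0 (min 1 ((R - t) / (R - r)))

lemma svBump_nonneg (r R t : ℝ) : 0 ≤ svBump r R t := le_max_left _ _

lemma svBump_le_one (r R t : ℝ) : svBump r R t ≤ 1 :=
  max_le zero_le_one (min_le_left _ _)

lemma svBump_continuous (r R : ℝ) : Continuous (svBump r R) := by
  unfold svBump
  exact continuous_const.max (continuous_const.min ((continuous_const.sub continuous_id).div_const _))

lemma svBump_eq_one {r R t : ℝ} (h : t ≤ r) (hrR : r < R) : svBump r R t = 1 := by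
  have h1 : (1 : ℝ) ≤ (R - t) / (R - r) := (le_div_iff₀ (by linarith)).2 (by linarith)
  unfold svBump
  rw [min_eq_left h1]
  exact max_eq_right zero_le_one

lemma svBump_eq_zero {r R t : ℝ} (h : R ≤ t) (hrR : r < R) : svBump r R t = 0 := by
  have h1 : (R - t) / (R - r) ≤ 0 :=
    div_nonpos_iff.2 (Or.inr ⟨by linarith, by linarith⟩)
  unfold svBump
  rw [max_eq_left (le_trans (min_le_right _ _) h1)]

lemma sv_count_le_sum (s : Multiset ℂ) {r R : ℝ} (hrR : r < R) :
    ((s.filter (fun z => ‖z‖ < r)).card : ℝ)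
      ≤ (s.map (fun z => svBump r R (‖z‖))).sum := by
  classical
  conv_rhs => rw [← Multiset.filter_add_not (fun z => ‖z‖ < r) s]
  rw [Multiset.map_add, Multiset.sum_add]
  have h1 : ((s.filter (fun z => ‖z‖ < r)).map
        (fun z => svBump r R (‖z‖))).card • (1:ℝ)
      ≤ ((s.filter (fun z => ‖z‖ < r)).map (fun z => svBump r R (‖z‖))).sum := by
    apply Multiset.card_nsmul_le_sum
    intro x hx
    obtain ⟨z, hz, rfl⟩ := Multiset.mem_map.1 hx
    exact (svBump_eq_one ((Multiset.mem_filter.1 hz).2).le hrR).ge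
  have h2 : (0:ℝ) ≤ ((s.filter (fun z => ¬ ‖z‖ < r)).map
      (fun z => svBump r R (‖z‖))).sum := by
    apply Multiset.sum_nonneg
    intro x hx
    obtain ⟨z, _, rfl⟩ := Multiset.mem_map.1 hx
    exact svBump_nonneg _ _ _
  rw [Multiset.card_map, nsmul_eq_mul, mul_one] at h1
  linarith

lemma sv_sum_le_count (s : Multiset ℂ) {r R T : ℝ} (hrR : r < R) (hRT : R ≤ T) :
    (s.map (fun z => svBump r R (‖z‖))).sum
      ≤ ((s.filter (fun z => ‖z‖ < T)).card : ℝ) := by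
  classical
  conv_lhs => rw [← Multiset.filter_add_not (fun z => ‖z‖ < T) s]
  rw [Multiset.map_add, Multiset.sum_add]
  have h1 : ((s.filter (fun z => ‖z‖ < T)).map
        (fun z => svBump r R (‖z‖))).sum
      ≤ (((s.filter (fun z => ‖z‖ < T)).map
        (fun z => svBump r R (‖z‖))).card) • (1:ℝ) := by
    apply Multiset.sum_le_card_nsmul
    intro x hx
    obtain ⟨z, _, rfl⟩ := Multiset.mem_map.1 hx
    exact svBump_le_one _ _ _
  have h2 : ((s.filter (fun z => ¬ ‖z‖ < T)).map
      (fun z => svBump r R (‖z‖))).sum ≤ 0 := by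
    have hb : ∀ x ∈ (s.filter (fun z => ¬ ‖z‖ < T)).map
        (fun z => svBump r R (‖z‖)), x ≤ 0 := by
      intro x hx
      obtain ⟨z, hz, rfl⟩ := Multiset.mem_map.1 hx
      have : T ≤ ‖z‖ := not_lt.1 (Multiset.mem_filter.1 hz).2
      exact (svBump_eq_zero (hRT.trans this) hrR).le
    calc _ ≤ (_ : ℕ) • (0:ℝ) := Multiset.sum_le_card_nsmul _ _ hb
    _ = 0 := smul_zero _
  rw [Multiset.card_map, nsmul_eq_mul, mul_one] at h1
  linarith

lemma sv_tendsto {k : ℕ} (D : Set (Fin k → ℝ)) (f : (Fin k → ℝ) → ℝ)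
    (A : (n : ℕ) → Matrix (Fin n) (Fin n) ℂ)
    (hdistr : ∀ F : ℂ → ℂ, Continuous F → HasCompactSupport F →
      Tendsto (fun n : ℕ => (n : ℂ)⁻¹ * (((A n).charpoly.roots).map F).sum) atTop
        (nhds (((volume D).toReal : ℂ)⁻¹ * ∫ x in D, F ((f x : ℂ)))))
    {r R : ℝ} (hrR : r < R) :
    Tendsto (fun n : ℕ =>
        (n : ℝ)⁻¹ * (((A n).charpoly.roots).map (fun z => svBump r R (‖z‖))).sum)
      atTop
      (nhds (((volume D).toReal)⁻¹ * ∫ x in D, svBump r R (‖(f x : ℂ)‖))) := by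
  set F : ℂ → ℂ := fun z => ((svBump r R (‖z‖) : ℝ) : ℂ) with hF
  have hcont : Continuous F :=
    Complex.continuous_ofReal.comp ((svBump_continuous r R).comp continuous_norm)
  have hsupp : HasCompactSupport F := by
    apply HasCompactSupport.intro (isCompact_closedBall (0:ℂ) R)
    intro z hz
    have : R < ‖z‖ := by
      simpa [Metric.mem_closedBall, Complex.dist_eq, not_le] using hz
    simp [hF, svBump_eq_zero this.le hrR]
  have h := hdistr F hcont hsupp
  have hkey : ∀ n : ℕ, (n : ℂ)⁻¹ * (((A n).charpoly.roots).map F).sum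
      = (((n : ℝ)⁻¹ * (((A n).charpoly.roots).map
          (fun z => svBump r R (‖z‖))).sum : ℝ) : ℂ) := by
    intro n
    have h1 : ((A n).charpoly.roots).map F
        = (((A n).charpoly.roots).map (fun z => svBump r R (‖z‖))).map
            (fun x : ℝ => (x : ℂ)) := by rw [Multiset.map_map]; rfl
    rw [h1]
    have h2 : ((((A n).charpoly.roots).map (fun z => svBump r R (‖z‖))).map
        (fun x : ℝ => (x : ℂ))).sum
        = ((( ((A n).charpoly.roots).map (fun z => svBump r R (‖z‖))).sum : ℝ) : ℂ) := by
      exact (map_multiset_sum (Complex.ofRealHom) _).symm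
    rw [h2]
    push_cast
    ring
  rw [tendsto_congr hkey] at h
  have hL : (((volume D).toReal : ℂ))⁻¹ * ∫ x in D, F ((f x : ℂ))
      = ((((volume D).toReal)⁻¹ * ∫ x in D, svBump r R (‖(f x : ℂ)‖) : ℝ) : ℂ) := by
    have hi : ∫ x in D, ((svBump r R (‖(f x : ℂ)‖) : ℝ) : ℂ) ∂volume
        = ((∫ x in D, svBump r R (‖(f x : ℂ)‖) ∂volume : ℝ) : ℂ) := integral_ofReal
    rw [show (fun x => F ((f x : ℂ))) = fun x => ((svBump r R (‖(f x : ℂ)‖) : ℝ) : ℂ) from rfl]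
    rw [hi]
    push_cast
    ring
  rw [hL] at h
  have h2 := (Complex.continuous_re.tendsto _).comp h
  simp only [Function.comp_def, Complex.ofReal_re] at h2
  exact h2

lemma sv_meas {k : ℕ} {f : (Fin k → ℝ) → ℝ} (hf : Measurable f) (r R : ℝ) :
    Measurable (fun x => svBump r R (‖(f x : ℂ)‖)) :=
  (((svBump_continuous r R).comp continuous_norm).measurable).comp
    (Complex.measurable_ofReal.comp hf)

lemma sv_integrable {k : ℕ} {D : Set (Fin k → ℝ)} {f : (Fin k → ℝ) → ℝ}
    (hDfin : volume D < ⊤) (hf : Measurable f) (r R : ℝ) :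
    Integrable (fun x => svBump r R (‖(f x : ℂ)‖)) (volume.restrict D) := by
  haveI : IsFiniteMeasure (volume.restrict D) := ⟨by rwa [Measure.restrict_apply_univ]⟩
  apply Integrable.mono' (integrable_const (1:ℝ)) (sv_meas hf r R).aestronglyMeasurable
  filter_upwards with x
  rw [Real.norm_eq_abs, abs_of_nonneg (svBump_nonneg _ _ _)]
  exact svBump_le_one _ _ _

lemma sv_integral_le {k : ℕ} {D : Set (Fin k → ℝ)} {f : (Fin k → ℝ) → ℝ}
    (hD : MeasurableSet D) (hDfin : volume D < ⊤) (hf : Measurable f)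
    {r R : ℝ} (hrR : r < R) :
    ∫ x in D, svBump r R (‖(f x : ℂ)‖)
      ≤ (volume ({x | |f x| ≤ R} ∩ D)).toReal := by
  haveI : IsFiniteMeasure (volume.restrict D) := ⟨by rwa [Measure.restrict_apply_univ]⟩
  have hE : MeasurableSet {x | |f x| ≤ R} := measurableSet_le hf.abs measurable_const
  have h1 : ∫ x in D, svBump r R (‖(f x : ℂ)‖)
      ≤ ∫ x in D, ({x | |f x| ≤ R}).indicator (fun _ => (1:ℝ)) x := by
    apply integral_mono (sv_integrable hDfin hf r R) ((integrable_const 1).indicator hE)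
    intro x
    by_cases hx : |f x| ≤ R
    · rw [Set.indicator_of_mem (show x ∈ {x | |f x| ≤ R} from hx)]
      exact svBump_le_one _ _ _
    · rw [Set.indicator_of_notMem (show x ∉ {x | |f x| ≤ R} from hx)]
      have hz : svBump r R (‖(f x : ℂ)‖) = 0 :=
        svBump_eq_zero (by rw [Complex.norm_real, Real.norm_eq_abs]; exact (not_le.1 hx).le) hrR
      simpa using hz.le
  rw [integral_indicator hE] at h1
  rw [setIntegral_const, smul_eq_mul, mul_one, measureReal_def, Measure.restrict_apply hE] at h1
  exact h1

lemma sv_le_integral {k : ℕ} {D : Set (Fin k → ℝ)} {f : (Fin k → ℝ) → ℝ}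
    (hD : MeasurableSet D) (hDfin : volume D < ⊤) (hf : Measurable f)
    {r R : ℝ} (hr : 0 ≤ r) (hrR : r < R) :
    (volume {x ∈ D | f x = 0}).toReal
      ≤ ∫ x in D, svBump r R (‖(f x : ℂ)‖) := by
  haveI : IsFiniteMeasure (volume.restrict D) := ⟨by rwa [Measure.restrict_apply_univ]⟩
  have hZ : MeasurableSet {x | f x = 0} := hf (measurableSet_singleton 0)
  have h1 : ∫ x in D, ({x | f x = 0}).indicator (fun _ => (1:ℝ)) x
      ≤ ∫ x in D, svBump r R (‖(f x : ℂ)‖) := by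
    apply integral_mono ((integrable_const 1).indicator hZ) (sv_integrable hDfin hf r R)
    intro x
    by_cases hx : f x = 0
    · rw [Set.indicator_of_mem (show x ∈ {x | f x = 0} from hx)]
      have hz : svBump r R (‖(f x : ℂ)‖) = 1 :=
        svBump_eq_one (by rw [hx]; simpa using hr) hrR
      simpa using hz.ge
    · rw [Set.indicator_of_notMem (show x ∉ {x | f x = 0} from hx)]
      exact svBump_nonneg _ _ _
  rw [integral_indicator hZ, setIntegral_const, smul_eq_mul, mul_one,
    measureReal_def, Measure.restrict_apply hZ] at h1
  have hset : {x ∈ D | f x = 0} = {x | f x = 0} ∩ D := by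
    ext x; exact ⟨fun h => ⟨h.2, h.1⟩, fun h => ⟨h.2, h.1⟩⟩
  rw [hset]
  exact h1

lemma sv_measure_tendsto {k : ℕ} {D : Set (Fin k → ℝ)} {f : (Fin k → ℝ) → ℝ}
    (hD : MeasurableSet D) (hDfin : volume D < ⊤) (hf : Measurable f)
    (h0 : volume {x ∈ D | f x = 0} = 0) :
    Tendsto (fun M : ℕ => (volume ({x | |f x| ≤ 2 / (M : ℝ)} ∩ D)).toReal)
      atTop (nhds 0) := by
  set s : ℕ → Set (Fin k → ℝ) := fun M => {x | |f x| ≤ 2 / ((M : ℝ) + 1)} ∩ D with hs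
  have hmeas : ∀ M, NullMeasurableSet (s M) volume := fun M =>
    ((measurableSet_le hf.abs measurable_const).inter hD).nullMeasurableSet
  have hanti : Antitone s := by
    intro M N hMN x hx
    obtain ⟨hx1, hx2⟩ := hx
    have hx1' : |f x| ≤ 2 / ((N : ℝ) + 1) := hx1
    refine ⟨show |f x| ≤ 2 / ((M : ℝ) + 1) from le_trans hx1' ?_, hx2⟩
    apply div_le_div_of_nonneg_left (by norm_num) (by positivity)
    have : (M : ℝ) ≤ N := Nat.cast_le.2 hMN
    linarith
  have hfin : ∃ i, volume (s i) ≠ ⊤ :=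
    ⟨0, ((measure_mono (Set.inter_subset_right)).trans_lt hDfin).ne⟩
  have hiInter : (⋂ M, s M) = {x ∈ D | f x = 0} := by
    ext x
    simp only [Set.mem_iInter, hs, Set.mem_inter_iff, Set.mem_setOf_eq, Set.mem_sep_iff]
    constructor
    · intro h
      refine ⟨(h 0).2, ?_⟩
      by_contra hne
      have habs : 0 < |f x| := abs_pos.2 hne
      obtain ⟨M, hM⟩ := exists_nat_gt (2 / |f x|)
      have h2 : 2 / ((M : ℝ) + 1) < |f x| := by
        rw [div_lt_iff₀ (by positivity)]
        rw [div_lt_iff₀ habs] at hM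
        nlinarith [habs]
      exact absurd (h M).1 (not_le.2 h2)
    · intro ⟨hxD, hfx⟩ M
      refine ⟨show |f x| ≤ 2 / ((M : ℝ) + 1) from ?_, hxD⟩
      rw [hfx, abs_zero]
      positivity
  have h1 := tendsto_measure_iInter_atTop hmeas hanti hfin
  rw [hiInter, h0] at h1
  have h2 := (ENNReal.tendsto_toReal (by norm_num)).comp h1
  simp only [ENNReal.toReal_zero] at h2
  have h3 : Tendsto (fun M : ℕ => (volume (s M)).toReal) atTop (nhds 0) := h2
  have h4 := h3.comp (tendsto_sub_atTop_nat 1)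
  apply h4.congr'
  filter_upwards [eventually_ge_atTop 1] with M hM
  simp only [Function.comp, hs]
  congr 3
  have : ((M - 1 : ℕ) : ℝ) + 1 = (M : ℝ) := by
    have := Nat.succ_pred_eq_of_pos hM
    exact_mod_cast congrArg (Nat.cast (R := ℝ)) this
  rw [this]

/-- If `{A n}ₙ` (matrices with real spectra) has asymptotic eigenvalue
distribution described by a measurable real-valued `f : D ⊂ ℝᵏ → ℝ` (with
`0 < μ(D) < ∞`), then `{A n}ₙ` is sparsely vanishing in the sense of the eigenvalues
if and only if `f` is sparsely vanishing. The eigenvalues, counted with multiplicity,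
are the roots of the characteristic polynomial. -/
theorem sparsely_vanishing_eigenvalues_iff_symbol_sparsely_vanishing
    (k : ℕ) (D : Set (Fin k → ℝ)) (hD : MeasurableSet D)
    (hD0 : 0 < volume D) (hDfin : volume D < ⊤)
    (f : (Fin k → ℝ) → ℝ) (hf : Measurable f)
    (A : (n : ℕ) → Matrix (Fin n) (Fin n) ℂ)
    (hreal : ∀ n, ∀ z ∈ (A n).charpoly.roots, z.im = 0)
    (hdistr : ∀ F : ℂ → ℂ, Continuous F → HasCompactSupport F →
      Tendsto (fun n : ℕ => (n : ℂ)⁻¹ * (((A n).charpoly.roots).map F).sum) atTop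
        (nhds (((volume D).toReal : ℂ)⁻¹ * ∫ x in D, F ((f x : ℂ))))) :
    Tendsto (fun M : ℕ =>
        limsup (fun n : ℕ =>
          ((((A n).charpoly.roots).filter fun z => ‖z‖ < 1 / (M : ℝ)).card : ℝ) / n)
        atTop)
      atTop (nhds 0)
    ↔ volume {x ∈ D | f x = 0} = 0 := by
  classical
  set u : ℕ → ℕ → ℝ := fun M n =>
    ((((A n).charpoly.roots).filter fun z => ‖z‖ < 1 / (M : ℝ)).card : ℝ) / n with hu
  have hd : 0 < (volume D).toReal := ENNReal.toReal_pos hD0.ne' hDfin.ne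
  have hcard : ∀ (n : ℕ) (T : ℝ),
      ((((A n).charpoly.roots).filter fun z => ‖z‖ < T).card : ℕ) ≤ n := by
    intro n T
    calc (((A n).charpoly.roots).filter fun z => ‖z‖ < T).card
        ≤ ((A n).charpoly.roots).card := Multiset.card_le_card (Multiset.filter_le _ _)
      _ ≤ (A n).charpoly.natDegree := Polynomial.card_roots' _
      _ = n := by simp [Matrix.charpoly_natDegree_eq_dim]
  have hu0 : ∀ M n, 0 ≤ u M n := fun M n =>
    div_nonneg (Nat.cast_nonneg _) (Nat.cast_nonneg _)
  have hu1 : ∀ M n, u M n ≤ 1 := by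
    intro M n
    rcases Nat.eq_zero_or_pos n with h | h
    · simp [hu, h]
    · rw [hu]
      apply div_le_one_of_le₀
      · exact_mod_cast hcard n _
      · exact Nat.cast_nonneg _
  have hbdd : ∀ M, IsBoundedUnder (· ≤ ·) atTop (u M) := fun M =>
    isBoundedUnder_of ⟨1, hu1 M⟩
  have hcob : ∀ M, IsCoboundedUnder (· ≤ ·) atTop (u M) := fun M =>
    isCoboundedUnder_le_of_le _ (hu0 M)
  constructor
  · -- eigenvalues sparsely vanishing ⇒ f sparsely vanishing
    intro htend
    by_contra h0
    have hfinZ : volume {x ∈ D | f x = 0} < ⊤ :=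
      (measure_mono (fun x hx => hx.1)).trans_lt hDfin
    have hc : 0 < (volume {x ∈ D | f x = 0}).toReal := ENNReal.toReal_pos h0 hfinZ.ne
    set c' : ℝ := ((volume D).toReal)⁻¹ * (volume {x ∈ D | f x = 0}).toReal with hc'def
    have hc' : 0 < c' := by positivity
    obtain ⟨M, hMlt, hM1⟩ := ((htend.eventually_lt_const hc').and (eventually_ge_atTop 1)).exists
    have hM0 : (0:ℝ) < (M : ℝ) := by exact_mod_cast hM1
    set r : ℝ := 1 / (2 * (M : ℝ)) with hrdef
    set R : ℝ := 3 / (4 * (M : ℝ)) with hRdef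
    have hr : 0 < r := by positivity
    have hrR : r < R := by
      rw [hrdef, hRdef, div_lt_div_iff₀ (by positivity) (by positivity)]
      nlinarith
    have hRT : R ≤ 1 / (M : ℝ) := by
      rw [hRdef, div_le_div_iff₀ (by positivity) (by positivity)]
      nlinarith
    have hS := sv_tendsto D f A hdistr hrR
    have hle : ∀ n : ℕ, (n : ℝ)⁻¹ * (((A n).charpoly.roots).map
        (fun z => svBump r R (‖z‖))).sum ≤ u M n := by
      intro n
      have h1 := sv_sum_le_count ((A n).charpoly.roots) hrR hRT
      show _ ≤ ((((A n).charpoly.roots).filter fun z =>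
        ‖z‖ < 1 / (M : ℝ)).card : ℝ) / (n : ℝ)
      rw [div_eq_inv_mul]
      exact mul_le_mul_of_nonneg_left h1 (by positivity)
    have hlimsup : ((volume D).toReal)⁻¹ *
        (∫ x in D, svBump r R (‖(f x : ℂ)‖)) ≤ limsup (u M) atTop := by
      rw [← hS.limsup_eq]
      exact limsup_le_limsup (Eventually.of_forall hle)
        (hS.isBoundedUnder_ge.isCoboundedUnder_le) (hbdd M)
    have hcL : c' ≤ ((volume D).toReal)⁻¹ *
        (∫ x in D, svBump r R (‖(f x : ℂ)‖)) := by
      rw [hc'def]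
      exact mul_le_mul_of_nonneg_left (sv_le_integral hD hDfin hf hr.le hrR)
        (by positivity)
    have : c' ≤ limsup (u M) atTop := hcL.trans hlimsup
    exact absurd hMlt (not_lt.2 this)
  · -- f sparsely vanishing ⇒ eigenvalues sparsely vanishing
    intro h0
    have hmt := sv_measure_tendsto hD hDfin hf h0
    have hb : Tendsto (fun M : ℕ => ((volume D).toReal)⁻¹ *
        (volume ({x | |f x| ≤ 2 / (M : ℝ)} ∩ D)).toReal) atTop (nhds 0) := by
      simpa using hmt.const_mul (((volume D).toReal)⁻¹)
    apply tendsto_of_tendsto_of_tendsto_of_le_of_le' tendsto_const_nhds hb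
    · filter_upwards with M
      exact le_limsup_of_frequently_le (Frequently.of_forall (hu0 M)) (hbdd M)
    · filter_upwards [eventually_ge_atTop 1] with M hM1
      have hM0 : (0:ℝ) < (M : ℝ) := by exact_mod_cast hM1
      set r : ℝ := 1 / (M : ℝ) with hrdef
      set R : ℝ := 2 / (M : ℝ) with hRdef
      have hrR : r < R := by
        rw [hrdef, hRdef, div_lt_div_iff₀ hM0 hM0]
        nlinarith
      have hS := sv_tendsto D f A hdistr hrR
      have hle : ∀ n : ℕ, u M n ≤ (n : ℝ)⁻¹ * (((A n).charpoly.roots).map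
          (fun z => svBump r R (‖z‖))).sum := by
        intro n
        have h1 := sv_count_le_sum ((A n).charpoly.roots) hrR
        show ((((A n).charpoly.roots).filter fun z =>
          ‖z‖ < 1 / (M : ℝ)).card : ℝ) / (n : ℝ) ≤ _
        rw [div_eq_inv_mul]
        refine mul_le_mul_of_nonneg_left ?_ (by positivity)
        exact h1
      have h2 : limsup (u M) atTop ≤ ((volume D).toReal)⁻¹ *
          (∫ x in D, svBump r R (‖(f x : ℂ)‖)) := by
        rw [← hS.limsup_eq]
        exact limsup_le_limsup (Eventually.of_forall hle) (hcob M) hS.isBoundedUnder_le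
      refine h2.trans ?_
      exact mul_le_mul_of_nonneg_left (sv_integral_le hD hDfin hf hrR) (by positivity)
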